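/- Let $\lambda_1, \dots, \lambda_n$ be distinct real numbers, let $\Lambda = \mathrm{diag}(\lambda_1, \dots, \lambda_n)$, and let $U$ be a real $n \times r$ matrix. For each $j$, let $u_j = U^T e_j \in \mathbb{R}^r$ (the $j$-th row of $U$ as a column vector) and let $D_j$ be the $n \times n$ diagonal matrix with $(D_j)_{kk} = 1/(\lambda_k - \lambda_j)$ for $k \neq j$ and $(D_j)_{jj} = 0$. Then for every real $\lambda \notin \{\lambda_1, \dots, \lambda_n\}$, the multiple-rank secular function admits the partial-fraction (secular) form $\det(I_r - U^T(\lambda I_n - \Lambda)^{-1} U) = 1 + \sum_{j=1}^{n} \frac{\alpha_j}{\lambda_j - \lambda}$, where $\alpha_j = u_j^{T} \, \mathrm{adj}(I_r + U^{T} D_j U) \, u_j$ and $\mathrm{adj}$ denotes the adjugate matrix. -/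

import Mathlib

open Matrix Finset Polynomial

lemma mdl_unit {K : Type*} [Field K] {m : Type*} [Fintype m] [DecidableEq m]
    (A : Matrix m m K) (hA : IsUnit A.det) (u v : m → K) :
    (A + replicateCol Unit u * replicateRow Unit v).det = A.det + v ⬝ᵥ A.adjugate *ᵥ u := by
  rw [Matrix.det_add_replicateCol_mul_replicateRow hA,
    Matrix.det_unique (1 + replicateRow Unit v * A⁻¹ * replicateCol Unit u)]
  have h1 : ((1 + replicateRow Unit v * A⁻¹ * replicateCol Unit u : Matrix Unit Unit K)) default default
      = 1 + v ⬝ᵥ A⁻¹ *ᵥ u := by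
    simp [Matrix.mul_apply, Matrix.one_apply, dotProduct, Matrix.mulVec, Finset.mul_sum,
      mul_comm, mul_assoc, mul_left_comm]
    rw [Finset.sum_comm]
  have hd : A.det ≠ 0 := hA.ne_zero
  rw [h1, Matrix.inv_def, Ring.inverse_eq_inv', Matrix.smul_mulVec, dotProduct_smul,
    smul_eq_mul, mul_add, mul_one]
  field_simp

lemma mdl {m : Type*} [Fintype m] [DecidableEq m] (A : Matrix m m ℝ) (u v : m → ℝ) :
    (A + replicateCol Unit u * replicateRow Unit v).det = A.det + v ⬝ᵥ A.adjugate *ᵥ u := by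
  set B : Matrix m m ℝ[X] := (X : ℝ[X]) • 1 + A.map C with hBdef
  have hBmap : ∀ t : ℝ, (evalRingHom t).mapMatrix B = t • 1 + A := by
    intro t
    ext i k
    simp [hBdef, Matrix.map_apply, Matrix.one_apply, apply_ite]
  set p : ℝ[X] := (B + replicateCol Unit (fun i => C (u i)) * replicateRow Unit (fun i => C (v i))).det with hp
  set q : ℝ[X] := B.det + (fun i => C (v i)) ⬝ᵥ B.adjugate *ᵥ (fun i => C (u i)) with hq
  have hpe : ∀ t : ℝ, eval t p = ((t • 1 + A) + replicateCol Unit u * replicateRow Unit v).det := by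
    intro t
    rw [hp, ← coe_evalRingHom, RingHom.map_det, RingHom.mapMatrix_apply]
    congr 1
    ext i k
    by_cases h : i = k <;>
      simp [hBdef, Matrix.map_apply, Matrix.mul_apply, Matrix.one_apply, h]
  have hqe : ∀ t : ℝ, eval t q =
      (t • 1 + A).det + v ⬝ᵥ (t • 1 + A).adjugate *ᵥ u := by
    intro t
    rw [hq, ← hBmap t, eval_add, ← coe_evalRingHom, RingHom.map_det, ← RingHom.map_adjugate]
    congr 1
    simp [dotProduct, Matrix.mulVec, eval_finset_sum, Matrix.map_apply, RingHom.mapMatrix_apply]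
  have hmonic : B.det.Monic := by
    have hB : B = charmatrix (-A) := by
      ext i k
      by_cases h : i = k <;>
        simp [hBdef, charmatrix_apply_eq, charmatrix_apply_ne, Matrix.map_apply,
          Matrix.one_apply, h, sub_eq_add_neg]
    rw [hB]
    exact Matrix.charpoly_monic (-A)
  have hroots : {t : ℝ | IsRoot (p - q) t}.Infinite := by
    have hfin : {t : ℝ | IsRoot B.det t}.Finite :=
      Polynomial.finite_setOf_isRoot hmonic.ne_zero
    apply Set.Infinite.mono (s := {t : ℝ | IsRoot B.det t}ᶜ) _ hfin.infinite_compl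
    intro t ht
    simp only [Set.mem_compl_iff, Set.mem_setOf_eq, IsRoot] at ht ⊢
    have hdd : eval t B.det = (t • 1 + A).det := by
      rw [← hBmap t, ← RingHom.map_det, coe_evalRingHom]
    rw [eval_sub, hpe, hqe,
      mdl_unit _ (isUnit_iff_ne_zero.mpr (hdd ▸ ht)), sub_self]
  have hpq : p = q := sub_eq_zero.mp (Polynomial.eq_zero_of_infinite_isRoot _ hroots)
  have h0 := congrArg (eval 0) hpq
  rw [hpe, hqe] at h0
  simpa using h0

noncomputable def secAlpha {n r : ℕ} (lam : Fin n → ℝ) (U : Matrix (Fin n) (Fin r) ℝ)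
    (j : Fin n) : ℝ :=
  (fun i => U j i) ⬝ᵥ
    (((1 : Matrix (Fin r) (Fin r) ℝ) +
        Uᵀ * Matrix.diagonal (fun k => if k = j then 0 else (lam k - lam j)⁻¹) * U).adjugate
      *ᵥ fun i => U j i)

lemma charpoly_eval {m : Type*} [Fintype m] [DecidableEq m] (A : Matrix m m ℝ) (t : ℝ) :
    A.charpoly.eval t = (t • (1 : Matrix m m ℝ) - A).det := by
  rw [Matrix.charpoly, ← coe_evalRingHom, RingHom.map_det]
  congr 1
  ext i k
  rcases eq_or_ne i k with h | h
  · subst h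
    simp [charmatrix_apply_eq, Matrix.one_apply_eq]
  · simp [charmatrix_apply_ne _ _ _ h, Matrix.one_apply_ne h]

lemma key' (n r : ℕ) (lam : Fin n → ℝ) (hlam : Function.Injective lam)
    (U : Matrix (Fin n) (Fin r) ℝ) (j : Fin n) :
    (Matrix.diagonal (fun k => lam k - lam j) + U * Uᵀ).det =
      secAlpha lam U j * ∏ k ∈ univ.erase j, (lam k - lam j) := by
  show _ = ((fun i => U j i) ⬝ᵥ
      (((1 : Matrix (Fin r) (Fin r) ℝ) +
          Uᵀ * Matrix.diagonal (fun k => if k = j then 0 else (lam k - lam j)⁻¹) * U).adjugate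
        *ᵥ fun i => U j i)) * ∏ k ∈ univ.erase j, (lam k - lam j)
  classical
  set u : Fin r → ℝ := fun i => U j i with hu
  set d' : Fin n → ℝ := fun k => if k = j then 0 else (lam k - lam j)⁻¹ with hd'
  set c : Fin n → ℝ := fun k => if k = j then 1 else lam k - lam j with hc
  set c' : Fin n → ℝ := fun k => if k = j then 1 else (lam k - lam j)⁻¹ with hc'
  set e : Fin n → ℝ := fun k => if k = j then 1 else 0 with he
  set M : Matrix (Fin n) (Fin n) ℝ :=
    Matrix.diagonal (fun k => lam k - lam j) + U * Uᵀ with hM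
  have hne : ∀ k, k ≠ j → lam k - lam j ≠ 0 := fun k hk =>
    sub_ne_zero.mpr (fun h => hk (hlam h))
  have hej : e j = 1 := by simp [he]
  have hek : ∀ k, k ≠ j → e k = 0 := fun k hk => by simp [he, hk]
  -- basic col/row facts
  have hde : (Matrix.diagonal e : Matrix (Fin n) (Fin n) ℝ) = replicateCol Unit e * replicateRow Unit e := by
    ext i k
    rw [Matrix.mul_apply]
    rcases eq_or_ne i k with h | h
    · subst h
      rcases eq_or_ne i j with h2 | h2
      · subst h2; simp [hej]
      · simp [hek i h2]
    · rcases eq_or_ne i j with h2 | h2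
      · have h3 : k ≠ j := fun hk => h (h2.trans hk.symm)
        simp [Matrix.diagonal_apply_ne _ h, hek k h3]
      · simp [Matrix.diagonal_apply_ne _ h, hek i h2]
  have hcu : Uᵀ * replicateCol Unit e = replicateCol Unit u := by
    ext i k
    simp [Matrix.mul_apply, he, hu, mul_ite]
  have hru : replicateRow Unit e * U = replicateRow Unit u := by
    ext i k
    simp [Matrix.mul_apply, he, hu, ite_mul]
  -- α via MDL
  set S : Matrix (Fin r) (Fin r) ℝ := 1 + Uᵀ * Matrix.diagonal d' * U with hS
  set α : ℝ := u ⬝ᵥ S.adjugate *ᵥ u with hα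
  have hdd' : Matrix.diagonal d' + Matrix.diagonal e = Matrix.diagonal c' := by
    rw [Matrix.diagonal_add]
    refine congrArg Matrix.diagonal (funext fun k => ?_)
    rcases eq_or_ne k j with h | h <;> simp [hd', he, hc', h]
  have hcolrow : replicateCol Unit u * replicateRow Unit u = Uᵀ * Matrix.diagonal e * U := by
    rw [hde, ← hcu, ← hru]
    simp only [Matrix.mul_assoc]
  have hSrank1 : S + replicateCol Unit u * replicateRow Unit u = 1 + Uᵀ * Matrix.diagonal c' * U := by
    rw [hS, hcolrow, add_assoc, ← Matrix.add_mul, ← Matrix.mul_add, hdd']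
  have hα2 : α = (1 + Uᵀ * Matrix.diagonal c' * U).det - S.det := by
    rw [← hSrank1, mdl S u u, hα]
    ring
  -- multiply by det (diagonal c)
  have hsyl : ∀ W : Matrix (Fin n) (Fin n) ℝ,
      Matrix.det (Matrix.diagonal c) * (1 + Uᵀ * W * U).det
        = (Matrix.diagonal c + Matrix.diagonal c * W * (U * Uᵀ)).det := by
    intro W
    rw [Matrix.mul_assoc, Matrix.det_one_add_mul_comm, ← Matrix.det_mul, Matrix.mul_add,
      Matrix.mul_one]
    congr 2
    simp only [Matrix.mul_assoc]
  have hcc' : Matrix.diagonal c * Matrix.diagonal c' = 1 := by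
    rw [Matrix.diagonal_mul_diagonal]
    rw [show (fun i => c i * c' i) = fun _ => (1 : ℝ) from funext fun k => by
      rcases eq_or_ne k j with h | h
      · simp [hc, hc', h]
      · simp [hc, hc', h, mul_inv_cancel₀ (hne _ h)]]
    exact Matrix.diagonal_one
  have hcd' : Matrix.diagonal c * Matrix.diagonal d' = 1 - Matrix.diagonal e := by
    rw [Matrix.diagonal_mul_diagonal]
    ext i k
    rcases eq_or_ne i k with h | h
    · subst h
      rcases eq_or_ne i j with h2 | h2
      · simp [hc, hd', he, h2]
      · simp [hc, hd', he, h2, Matrix.one_apply, mul_inv_cancel₀ (hne _ h2)]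
    · simp [Matrix.diagonal_apply_ne _ h, Matrix.one_apply_ne h]
  have hcM : Matrix.diagonal c = Matrix.diagonal (fun k => lam k - lam j)
      + Matrix.diagonal e := by
    rw [Matrix.diagonal_add]
    refine congrArg Matrix.diagonal (funext fun k => ?_)
    rcases eq_or_ne k j with h | h <;> simp [hc, he, h]
  set w : Fin n → ℝ := (U * Uᵀ) *ᵥ e with hw
  have hterm1 : Matrix.diagonal c + 1 * (U * Uᵀ) = M + replicateCol Unit e * replicateRow Unit e := by
    rw [Matrix.one_mul, hcM, hM, ← hde]
    abel
  have hterm2 : Matrix.diagonal c + (1 - Matrix.diagonal e) * (U * Uᵀ)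
      = M + replicateCol Unit e * replicateRow Unit (e - w) := by
    have hrw : replicateRow Unit (e - w) = replicateRow Unit e - replicateRow Unit w := by
      ext i k; simp [Matrix.replicateRow_apply]
    have hdw : Matrix.diagonal e * (U * Uᵀ) = replicateCol Unit e * replicateRow Unit w := by
      rw [hde, Matrix.mul_assoc]
      congr 1
      rw [hw]
      ext i k
      simp [Matrix.mul_apply, Matrix.mulVec, dotProduct, he, ite_mul, mul_comm]
    rw [hrw, Matrix.mul_sub, Matrix.sub_mul, Matrix.one_mul, hdw, hcM, hde, hM]
    abel
  have hdetc : Matrix.det (Matrix.diagonal c) = ∏ k ∈ univ.erase j, (lam k - lam j) := by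
    rw [Matrix.det_diagonal, ← Finset.mul_prod_erase univ c (mem_univ j)]
    have : c j = 1 := by simp [hc]
    rw [this, one_mul]
    exact Finset.prod_congr rfl fun k hk => by
      simp [hc, (Finset.mem_erase.mp hk).1]
  -- combine
  have hfinal : Matrix.det (Matrix.diagonal c) * α = M.det := by
    rw [hα2, mul_sub, hS, hsyl, hsyl, hcc', hcd', hterm1, hterm2, mdl, mdl]
    have hsub : (e - w) ⬝ᵥ M.adjugate *ᵥ e = e ⬝ᵥ M.adjugate *ᵥ e - w ⬝ᵥ M.adjugate *ᵥ e := by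
      simp [sub_dotProduct]
    rw [hsub]
    have hMsymm : Mᵀ = M := by
      rw [hM, Matrix.transpose_add, Matrix.diagonal_transpose, Matrix.transpose_mul,
        Matrix.transpose_transpose]
    have hwM : M *ᵥ e = w := by
      rw [hM, Matrix.add_mulVec, hw]
      have h1 : Matrix.diagonal (fun k => lam k - lam j) *ᵥ e = 0 := by
        funext k
        rcases eq_or_ne k j with h | h <;>
          simp [Matrix.mulVec_diagonal, he, h]
      rw [h1, zero_add]
    have hwadj : w ⬝ᵥ M.adjugate *ᵥ e = M.det := by
      rw [← hwM, dotProduct_comm, Matrix.dotProduct_mulVec]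
      have h2 : (M.adjugate *ᵥ e) ᵥ* M = (M * M.adjugate) *ᵥ e := by
        rw [← Matrix.mulVec_transpose, hMsymm, Matrix.mulVec_mulVec]
      rw [h2, Matrix.mul_adjugate, Matrix.smul_mulVec, Matrix.one_mulVec,
        smul_dotProduct]
      have : e ⬝ᵥ e = 1 := by simp [dotProduct, he]
      rw [this, smul_eq_mul, mul_one]
    rw [hwadj]
    ring
  rw [← hdetc, ← hfinal, mul_comm]

lemma charpoly_eq (n r : ℕ) (hn : 0 < n) (lam : Fin n → ℝ) (hlam : Function.Injective lam)
    (U : Matrix (Fin n) (Fin r) ℝ) :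
    (Matrix.diagonal lam + U * Uᵀ).charpoly
      = ∏ k : Fin n, (X - C (lam k))
        - ∑ j : Fin n, C (secAlpha lam U j) * ∏ k ∈ univ.erase j, (X - C (lam k)) := by
  classical
  set A := Matrix.diagonal lam + U * Uᵀ with hA
  set P := A.charpoly with hP
  set Q : ℝ[X] := ∏ k : Fin n, (X - C (lam k))
    - ∑ j : Fin n, C (secAlpha lam U j) * ∏ k ∈ univ.erase j, (X - C (lam k)) with hQ
  have hcard : Fintype.card (Fin n) = n := Fintype.card_fin n
  have hdegP : P.degree = (n : ℕ) := by
    rw [hP, Matrix.charpoly_degree_eq_dim, hcard]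
  have hmonP : P.Monic := Matrix.charpoly_monic A
  have hdegprod : (∏ k : Fin n, (X - C (lam k)) : ℝ[X]).degree = (n : ℕ) := by
    rw [Polynomial.degree_prod]
    simp only [Polynomial.degree_X_sub_C, Finset.sum_const, Finset.card_univ, hcard,
      nsmul_eq_mul, mul_one]
  have hmonprod : (∏ k : Fin n, (X - C (lam k)) : ℝ[X]).Monic :=
    monic_prod_of_monic _ _ fun k _ => monic_X_sub_C _
  have hd1 : (P - ∏ k : Fin n, (X - C (lam k))).degree < (n : ℕ) := by
    have := Polynomial.degree_sub_lt (hdegP.trans hdegprod.symm) hmonP.ne_zero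
      (by rw [hmonP.leadingCoeff, hmonprod.leadingCoeff])
    rwa [hdegP] at this
  have hd2 : (∑ j : Fin n, C (secAlpha lam U j) * ∏ k ∈ univ.erase j, (X - C (lam k))
      : ℝ[X]).degree < (n : ℕ) := by
    refine lt_of_le_of_lt (Polynomial.degree_sum_le _ _) ?_
    rw [Finset.sup_lt_iff (by exact_mod_cast WithBot.bot_lt_coe n)]
    intro j _
    refine lt_of_le_of_lt (Polynomial.degree_mul_le _ _) ?_
    have h2 : (∏ k ∈ univ.erase j, (X - C (lam k)) : ℝ[X]).degree = ((n - 1 : ℕ) : ℕ) := by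
      rw [Polynomial.degree_prod]
      simp only [Polynomial.degree_X_sub_C, Finset.sum_const, nsmul_eq_mul, mul_one,
        Finset.card_erase_of_mem (mem_univ j), Finset.card_univ, hcard]
    refine lt_of_le_of_lt (add_le_add Polynomial.degree_C_le h2.le) ?_
    rw [zero_add]
    exact_mod_cast Nat.sub_lt hn one_pos
  have heval : ∀ i, (P - Q).eval (lam i) = 0 := by
    intro i
    have hP' : P.eval (lam i)
        = (-1 : ℝ)^n * (secAlpha lam U i * ∏ k ∈ univ.erase i, (lam k - lam i)) := by
      rw [hP, charpoly_eval]
      have hmat : (lam i) • (1 : Matrix (Fin n) (Fin n) ℝ) - A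
          = -(Matrix.diagonal (fun k => lam k - lam i) + U * Uᵀ) := by
        rw [hA]
        ext a b
        rcases eq_or_ne a b with h | h
        · subst h
          simp only [Matrix.sub_apply, Matrix.smul_apply, Matrix.one_apply_eq, smul_eq_mul,
            mul_one, Matrix.add_apply, Matrix.diagonal_apply_eq, Matrix.neg_apply]
          ring
        · simp [Matrix.one_apply_ne h, Matrix.diagonal_apply_ne _ h]
      rw [hmat, Matrix.det_neg, key' n r lam hlam U i, hcard]
    have hQ' : Q.eval (lam i)
        = -(secAlpha lam U i * ∏ k ∈ univ.erase i, (lam i - lam k)) := by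
      rw [hQ, eval_sub, eval_prod, eval_finset_sum]
      have h0 : ∏ k : Fin n, eval (lam i) (X - C (lam k)) = 0 :=
        Finset.prod_eq_zero (mem_univ i) (by simp)
      have h1 : (∑ j : Fin n,
          eval (lam i) (C (secAlpha lam U j) * ∏ k ∈ univ.erase j, (X - C (lam k))))
          = secAlpha lam U i * ∏ k ∈ univ.erase i, (lam i - lam k) := by
        rw [Finset.sum_eq_single i]
        · simp [eval_prod]
        · intro j _ hj
          simp only [eval_mul, eval_C, eval_prod, eval_sub, eval_X]
          have : ∏ k ∈ univ.erase j, (lam i - lam k) = 0 :=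
            Finset.prod_eq_zero (Finset.mem_erase.mpr ⟨Ne.symm hj, mem_univ i⟩) (by simp)
          rw [this, mul_zero]
        · intro h; exact absurd (mem_univ i) h
      rw [h0, h1, zero_sub]
    have hswap : ∏ k ∈ univ.erase i, (lam i - lam k)
        = (-1 : ℝ)^(n-1) * ∏ k ∈ univ.erase i, (lam k - lam i) := by
      rw [Finset.prod_congr rfl fun k _ => show lam i - lam k = -1 * (lam k - lam i) by ring,
        Finset.prod_mul_distrib, Finset.prod_const,
        Finset.card_erase_of_mem (mem_univ i), Finset.card_univ, hcard]
    have hpow : (-1 : ℝ)^n = (-1)^(n-1) * (-1) := by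
      conv_lhs => rw [show n = (n-1)+1 from (Nat.succ_pred_eq_of_pos hn).symm]
      rw [pow_succ]
    rw [eval_sub, hP', hQ', hswap, hpow]
    ring
  by_cases hz : P - Q = 0
  · exact sub_eq_zero.mp hz
  · exfalso
    apply hz
    apply Polynomial.eq_zero_of_natDegree_lt_card_of_eval_eq_zero (P - Q) hlam heval
    rw [hcard]
    have hsplit : P - Q = (P - ∏ k : Fin n, (X - C (lam k)))
        + ∑ j : Fin n, C (secAlpha lam U j) * ∏ k ∈ univ.erase j, (X - C (lam k)) := by
      rw [hQ]; ring
    refine (Polynomial.natDegree_lt_iff_degree_lt hz).mpr ?_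
    rw [hsplit]
    exact lt_of_le_of_lt (Polynomial.degree_add_le _ _) (max_lt hd1 hd2)

/-- Partial-fraction (secular) form of the multiple-rank secular function
`f(λ) = det (I_r - Uᵀ (λ Iₙ - Λ)⁻¹ U)` for `Λ = diag(λ₁, …, λₙ)` with distinct
diagonal entries: `f(λ) = 1 + ∑ j, αⱼ / (λⱼ - λ)` where
`αⱼ = uⱼᵀ adj(I_r + Uᵀ Dⱼ U) uⱼ`, `uⱼ` the `j`-th row of `U`, and
`Dⱼ = diag(1/(λ_k - λ_j))` with `(Dⱼ)ⱼⱼ = 0`. -/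
theorem multiple_rank_secular_partial_fraction (n r : ℕ) (lam : Fin n → ℝ)
    (hlam : Function.Injective lam) (U : Matrix (Fin n) (Fin r) ℝ)
    (x : ℝ) (hx : ∀ j, x ≠ lam j) :
    ((1 : Matrix (Fin r) (Fin r) ℝ) -
        Uᵀ * (x • (1 : Matrix (Fin n) (Fin n) ℝ) - Matrix.diagonal lam)⁻¹ * U).det =
      1 + ∑ j : Fin n,
        ((fun i => U j i) ⬝ᵥ
            (((1 : Matrix (Fin r) (Fin r) ℝ) +
                Uᵀ * Matrix.diagonal (fun k => if k = j then 0 else (lam k - lam j)⁻¹) * U).adjugate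
              *ᵥ fun i => U j i)) / (lam j - x) := by
  classical
  have hsum : ∀ j : Fin n,
      ((fun i => U j i) ⬝ᵥ
          (((1 : Matrix (Fin r) (Fin r) ℝ) +
              Uᵀ * Matrix.diagonal (fun k => if k = j then 0 else (lam k - lam j)⁻¹) * U).adjugate
            *ᵥ fun i => U j i)) = secAlpha lam U j := fun j => rfl
  simp only [hsum]
  rcases Nat.eq_zero_or_pos n with hn | hn
  · subst hn
    have h0 : Uᵀ * (x • (1 : Matrix (Fin 0) (Fin 0) ℝ) - Matrix.diagonal lam)⁻¹ * U = 0 := by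
      ext i k
      simp [Matrix.mul_apply]
    rw [h0, sub_zero, Matrix.det_one]
    simp
  · have hxk : ∀ k, x - lam k ≠ 0 := fun k => sub_ne_zero.mpr (hx k)
    have hBd : x • (1 : Matrix (Fin n) (Fin n) ℝ) - Matrix.diagonal lam
        = Matrix.diagonal (fun k => x - lam k) := by
      ext a b
      rcases eq_or_ne a b with h | h
      · subst h; simp
      · simp [Matrix.one_apply_ne h, Matrix.diagonal_apply_ne _ h]
    have hinv : (Matrix.diagonal (fun k => x - lam k))⁻¹
        = Matrix.diagonal (fun k => (x - lam k)⁻¹) :=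
      Matrix.inv_eq_right_inv (by
        rw [Matrix.diagonal_mul_diagonal,
          show (fun k => (x - lam k) * (x - lam k)⁻¹) = fun _ => (1 : ℝ) from
            funext fun k => mul_inv_cancel₀ (hxk k), Matrix.diagonal_one])
    rw [hBd, hinv]
    set Pd : ℝ := ∏ k : Fin n, (x - lam k) with hPd
    have hPd_ne : Pd ≠ 0 := Finset.prod_ne_zero_iff.mpr fun k _ => hxk k
    apply mul_left_cancel₀ hPd_ne
    -- LHS chain
    have hLHS : (1 - Uᵀ * Matrix.diagonal (fun k => (x - lam k)⁻¹) * U).det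
        = (1 - Matrix.diagonal (fun k => (x - lam k)⁻¹) * (U * Uᵀ)).det := by
      rw [Matrix.mul_assoc, Matrix.det_one_sub_mul_comm, ← Matrix.mul_assoc]
    have hMul : Pd * (1 - Matrix.diagonal (fun k => (x - lam k)⁻¹) * (U * Uᵀ)).det
        = (x • (1 : Matrix (Fin n) (Fin n) ℝ) - (Matrix.diagonal lam + U * Uᵀ)).det := by
      rw [hPd,
        show (∏ k : Fin n, (x - lam k)) = (Matrix.diagonal fun k => x - lam k).det from
          (Matrix.det_diagonal).symm,
        ← Matrix.det_mul, Matrix.mul_sub,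
        Matrix.mul_one, ← Matrix.mul_assoc, Matrix.diagonal_mul_diagonal,
        show (fun k => (x - lam k) * (x - lam k)⁻¹) = fun _ => (1 : ℝ) from
          funext fun k => mul_inv_cancel₀ (hxk k), Matrix.diagonal_one, Matrix.one_mul,
        sub_add_eq_sub_sub, hBd]
    have hchar : (x • (1 : Matrix (Fin n) (Fin n) ℝ) - (Matrix.diagonal lam + U * Uᵀ)).det
        = Pd - ∑ j : Fin n, secAlpha lam U j * ∏ k ∈ univ.erase j, (x - lam k) := by
      rw [← charpoly_eval, charpoly_eq n r hn lam hlam U, eval_sub, eval_prod, eval_finset_sum]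
      simp only [eval_mul, eval_C, eval_prod, eval_sub, eval_X, hPd]
    rw [hLHS, hMul, hchar]
    -- RHS chain
    rw [mul_add, mul_one, Finset.mul_sum]
    have hterm : ∀ j : Fin n, Pd * (secAlpha lam U j / (lam j - x))
        = -(secAlpha lam U j * ∏ k ∈ univ.erase j, (x - lam k)) := by
      intro j
      have hj : lam j - x ≠ 0 := fun h => hx j (by linarith [sub_eq_zero.mp h])
      rw [hPd, ← Finset.mul_prod_erase univ _ (mem_univ j)]
      field_simp
      ring
    rw [Finset.sum_congr rfl fun j _ => hterm j, Finset.sum_neg_distrib]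
    ring
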